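/- Let s ≥ 1 be an integer, h > 0, and let K : ℝ → ℝ be a kernel with α_j(K) = 0 for j = 1,…,s−1 and β_s(K) < ∞. Let f : ℝ → ℝ be s-smooth and integrable. Then for almost every x ∈ ℝ, (f ∗ S_h K)(x) − f(x) = ((−h)^s / s!) · ∫ [ ∫₀¹ f^{(s)}(x − hλt) · s(1−λ)^{s−1} dλ ] · t^s K(t) dt. -/

import Mathlib

open MeasureTheory Filter

/-- Scaled kernel `(S_h K)(x) = (1/h) K(x/h)`. -/
noncomputable def Sker (h : ℝ) (K : ℝ → ℝ) : ℝ → ℝ := fun x => (1 / h) * K (x / h)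

/-- Convolution `(f ∗ g)(x) = ∫ g(y) f(x − y) dy`. -/
noncomputable def conv (f g : ℝ → ℝ) : ℝ → ℝ := fun x => ∫ y, g y * f (x - y)

/-- `L¹` norm `‖g‖₁ = ∫ |g|`. -/
noncomputable def L1norm (g : ℝ → ℝ) : ℝ := ∫ x, |g x|

/-- Moment `α_j(K) = ∫ t^j K(t) dt`. -/
noncomputable def alphaM (j : ℕ) (K : ℝ → ℝ) : ℝ := ∫ t, t ^ j * K t

/-- Absolute moment `β_r(K) = ∫ |t|^r |K(t)| dt` (real exponent). -/
noncomputable def betaM (r : ℝ) (K : ℝ → ℝ) : ℝ := ∫ t, |t| ^ r * |K t|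

/-- A kernel: integrable with total integral one. -/
def IsKernel (K : ℝ → ℝ) : Prop := Integrable K ∧ ∫ x, K x = 1

/-- A kernel of order `s`: `α_j(K) = 0` for `1 ≤ j < s` and `α_s(K) ≠ 0`. -/
def IsKernelOfOrder (s : ℕ) (K : ℝ → ℝ) : Prop :=
  IsKernel K ∧ (∀ j, 1 ≤ j → j < s → alphaM j K = 0) ∧ alphaM s K ≠ 0

/-- `f` is `s`-smooth with `s`-th derivative `fs`: `f` is `(s−1)`-times differentiable,
`f^{(s−1)}` is absolutely continuous with a.e. derivative `fs`, and `fs ∈ L¹`. -/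
def SSmooth (s : ℕ) (f fs : ℝ → ℝ) : Prop :=
  (∀ k, k < s - 1 → Differentiable ℝ (iteratedDeriv k f)) ∧
  (∀ a b : ℝ, a ≤ b →
    iteratedDeriv (s - 1) f b - iteratedDeriv (s - 1) f a = ∫ x in a..b, fs x) ∧
  Integrable fs

/-- `L¹` continuity modulus `ω(δ) = sup_{|t| ≤ δ} ∫ |g(x − t) − g(x)| dx`. -/
noncomputable def omegaMod (g : ℝ → ℝ) (δ : ℝ) : ℝ :=
  ⨆ t : {t : ℝ // |t| ≤ δ}, ∫ x, |g (x - (t : ℝ)) - g x|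

/-- Uniform integrability of a sequence of functions on `ℝ`. -/
def UnifIntegrableSeq (g : ℕ → ℝ → ℝ) : Prop :=
  (∀ n, Integrable (g n)) ∧
  (∃ C, ∀ n, (∫ t, |g n t|) ≤ C) ∧
  (∀ ε : ℝ, 0 < ε → ∃ T : ℝ, ∀ n, (∫ t in {t : ℝ | T < |t|}, |g n t|) < ε)

/-- Membership in the class `Lip(a, δ)` with positive Lipschitz constant and radius. -/
def MemLipPos (a δ : ℝ) (g : ℝ → ℝ) : Prop :=
  ∃ l r : ℝ → ℝ, (∀ x, 0 < l x) ∧ (∀ x, 0 < r x) ∧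
    (∀ x u : ℝ, |u| ≤ r x → |g (x - u) - g x| ≤ l x * |u| ^ a) ∧
    Integrable (fun x => l x + (r x) ^ (-δ))

lemma int_pow_eval (y p q : ℝ) (n : ℕ) :
    ∫ u in p..q, (y - u) ^ n = ((y - p) ^ (n + 1) - (y - q) ^ (n + 1)) / (n + 1) := by
  have h : (∫ u in p..q, (y - u) ^ n) = ∫ u in y - q..y - p, u ^ n := by
    exact intervalIntegral.integral_comp_sub_left (fun u => u ^ n) y
  rw [h, integral_pow]

lemma fub (a b : ℝ) (w g : ℝ → ℝ) (hw : IntegrableOn w (Set.Ioc a b))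
    (hg : IntegrableOn g (Set.Ioc a b)) :
    ∫ u in Set.Ioc a b, w u * ∫ v in Set.Ioc a u, g v
      = ∫ v in Set.Ioc a b, (∫ u in Set.Ioc v b, w u) * g v := by
  set μ := volume.restrict (Set.Ioc a b) with hμ
  set F : ℝ → ℝ → ℝ := fun u v => {p : ℝ × ℝ | p.2 ≤ p.1}.indicator
    (fun p => w p.1 * g p.2) (u, v) with hF
  have hFint : Integrable (Function.uncurry F) (μ.prod μ) := by
    have hbase : Integrable (fun p : ℝ × ℝ => w p.1 * g p.2) (μ.prod μ) :=
      Integrable.mul_prod hw hg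
    have hmeas : MeasurableSet {p : ℝ × ℝ | p.2 ≤ p.1} :=
      measurableSet_le measurable_snd measurable_fst
    have : Function.uncurry F = {p : ℝ × ℝ | p.2 ≤ p.1}.indicator
        (fun p => w p.1 * g p.2) := by
      funext p; cases p; rfl
    rw [this]
    exact hbase.indicator hmeas
  have hswap := MeasureTheory.integral_integral_swap hFint
  have hL : ∫ u, ∫ v, F u v ∂μ ∂μ = ∫ u in Set.Ioc a b, w u * ∫ v in Set.Ioc a u, g v := by
    apply setIntegral_congr_fun measurableSet_Ioc
    intro u hu
    show (∫ v, F u v ∂μ) = w u * ∫ v in Set.Ioc a u, g v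
    have h1 : (fun v => F u v) = (Set.Iic u).indicator (fun v => w u * g v) := by
      funext v
      simp only [hF, Set.indicator_apply, Set.mem_setOf_eq, Set.mem_Iic]
    rw [h1, integral_indicator measurableSet_Iic, hμ,
      Measure.restrict_restrict measurableSet_Iic]
    have h2 : Set.Iic u ∩ Set.Ioc a b = Set.Ioc a u := by
      rw [Set.inter_comm, Set.Ioc_inter_Iic, min_eq_right hu.2]
    rw [h2, integral_const_mul]
  have hR : ∫ v, ∫ u, F u v ∂μ ∂μ = ∫ v in Set.Ioc a b, (∫ u in Set.Ioc v b, w u) * g v := by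
    apply setIntegral_congr_fun measurableSet_Ioc
    intro v hv
    show (∫ u, F u v ∂μ) = (∫ u in Set.Ioc v b, w u) * g v
    have h1 : (fun u => F u v) = (Set.Ici v).indicator (fun u => w u * g v) := by
      funext u
      simp only [hF, Set.indicator_apply, Set.mem_setOf_eq, Set.mem_Ici]
    rw [h1, integral_indicator measurableSet_Ici, hμ,
      Measure.restrict_restrict measurableSet_Ici]
    have h2 : Set.Ici v ∩ Set.Ioc a b = Set.Icc v b := by
      ext u
      simp only [Set.mem_inter_iff, Set.mem_Ici, Set.mem_Ioc, Set.mem_Icc]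
      constructor
      · rintro ⟨h1, _, h3⟩; exact ⟨h1, h3⟩
      · rintro ⟨h1, h3⟩; exact ⟨h1, lt_of_lt_of_le hv.1 h1, h3⟩
    rw [h2, integral_Icc_eq_integral_Ioc, integral_mul_const]
  rw [← hL, ← hR]; exact hswap

lemma lemB (G gg : ℝ → ℝ) (n : ℕ)
    (hrep : ∀ a b : ℝ, G b - G a = ∫ v in a..b, gg v)
    (hint : ∀ a b : ℝ, IntervalIntegrable gg volume a b) (x y : ℝ) :
    ∫ u in x..y, (y - u) ^ n / n.factorial * G u
      = G x * (y - x) ^ (n + 1) / (n + 1).factorial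
        + ∫ u in x..y, (y - u) ^ (n + 1) / (n + 1).factorial * gg u := by
  have hfacn : ((n.factorial : ℝ)) ≠ 0 := Nat.cast_ne_zero.2 (Nat.factorial_ne_zero n)
  have hfacn1 : (((n + 1).factorial : ℝ)) ≠ 0 := Nat.cast_ne_zero.2 (Nat.factorial_ne_zero _)
  have hGx : ∀ u, G u = G x + ∫ v in x..u, gg v := by
    intro u; have := hrep x u; linarith
  have hprim : Continuous fun u => ∫ v in x..u, gg v :=
    intervalIntegral.continuous_primitive hint x
  have hsplit : (fun u => (y - u) ^ n / n.factorial * G u)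
      = fun u => (y - u) ^ n / n.factorial * G x
        + (y - u) ^ n / n.factorial * (∫ v in x..u, gg v) := by
    funext u; rw [hGx u]; ring
  have hc1 : Continuous fun u : ℝ => (y - u) ^ n / n.factorial * G x := by fun_prop
  have hc2 : Continuous fun u : ℝ => (y - u) ^ n / n.factorial * (∫ v in x..u, gg v) := by
    exact (by fun_prop : Continuous fun u : ℝ => (y - u) ^ n / (n.factorial : ℝ)).mul hprim
  rw [hsplit, intervalIntegral.integral_add (hc1.intervalIntegrable x y)
    (hc2.intervalIntegrable x y)]
  have e1 : (∫ u in x..y, (y - u) ^ n / n.factorial * G x)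
      = G x * (y - x) ^ (n + 1) / (n + 1).factorial := by
    have : (fun u => (y - u) ^ n / n.factorial * G x)
        = fun u => (y - u) ^ n * (G x / n.factorial) := by funext u; ring
    rw [this, intervalIntegral.integral_mul_const, int_pow_eval]
    have hfs : ((n + 1).factorial : ℝ) = (n + 1) * n.factorial := by
      push_cast [Nat.factorial_succ]; ring
    rw [hfs]
    have hn1 : ((n : ℝ) + 1) ≠ 0 := by positivity
    field_simp
    ring
  rw [e1]
  congr 1
  -- key Fubini step
  have wint : ∀ p q : ℝ, IntegrableOn (fun u => (y - u) ^ n / n.factorial) (Set.Ioc p q) :=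
    fun p q => (by fun_prop : Continuous fun u : ℝ => (y - u) ^ n / (n.factorial : ℝ)).integrableOn_Ioc
  have hioc : ∀ p q : ℝ, ∫ u in p..q, (y - u) ^ n / n.factorial
      = ((y - p) ^ (n + 1) - (y - q) ^ (n + 1)) / (n + 1).factorial := by
    intro p q
    rw [intervalIntegral.integral_div, int_pow_eval]
    have hfs : ((n + 1).factorial : ℝ) = (n + 1) * n.factorial := by
      push_cast [Nat.factorial_succ]; ring
    rw [hfs]
    have hn1 : ((n : ℝ) + 1) ≠ 0 := by positivity
    field_simp
  rcases le_total x y with hxy | hxy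
  · rw [intervalIntegral.integral_of_le hxy, intervalIntegral.integral_of_le hxy]
    have congr1 : ∫ u in Set.Ioc x y, (y - u) ^ n / n.factorial * (∫ v in x..u, gg v)
        = ∫ u in Set.Ioc x y, (y - u) ^ n / n.factorial * (∫ v in Set.Ioc x u, gg v) := by
      apply setIntegral_congr_fun measurableSet_Ioc
      intro u hu
      show (y - u) ^ n / (n.factorial : ℝ) * (∫ v in x..u, gg v)
          = (y - u) ^ n / (n.factorial : ℝ) * (∫ v in Set.Ioc x u, gg v)
      rw [intervalIntegral.integral_of_le hu.1.le]
    rw [congr1, fub x y _ gg (wint x y) (hint x y).1]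
    apply setIntegral_congr_fun measurableSet_Ioc
    intro v hv
    show (∫ u in Set.Ioc v y, (y - u) ^ n / (n.factorial : ℝ)) * gg v
        = (y - v) ^ (n + 1) / ((n + 1).factorial : ℝ) * gg v
    rw [← intervalIntegral.integral_of_le hv.2, hioc v y]
    simp [mul_comm]
  · -- case y ≤ x
    have h := fub y x gg (fun u => (y - u) ^ n / (n.factorial : ℝ)) (hint y x).1 (wint y x)
    have L : (∫ u in x..y, (y - u) ^ n / (n.factorial : ℝ) * ∫ v in x..u, gg v)
        = ∫ u in Set.Ioc y x, (y - u) ^ n / (n.factorial : ℝ) * ∫ v in Set.Ioc u x, gg v := by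
      rw [intervalIntegral.integral_symm, intervalIntegral.integral_of_le hxy, ← integral_neg]
      apply setIntegral_congr_fun measurableSet_Ioc
      intro u hu
      show -((y - u) ^ n / (n.factorial : ℝ) * ∫ v in x..u, gg v)
          = (y - u) ^ n / (n.factorial : ℝ) * ∫ v in Set.Ioc u x, gg v
      rw [intervalIntegral.integral_symm, intervalIntegral.integral_of_le hu.2]
      ring
    have R : (∫ u in x..y, (y - u) ^ (n + 1) / ((n + 1).factorial : ℝ) * gg u)
        = ∫ u in Set.Ioc y x, (∫ v in Set.Ioc y u, (y - v) ^ n / (n.factorial : ℝ)) * gg u := by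
      rw [intervalIntegral.integral_symm, intervalIntegral.integral_of_le hxy, ← integral_neg]
      apply setIntegral_congr_fun measurableSet_Ioc
      intro u hu
      show -((y - u) ^ (n + 1) / ((n + 1).factorial : ℝ) * gg u)
          = (∫ v in Set.Ioc y u, (y - v) ^ n / (n.factorial : ℝ)) * gg u
      rw [← intervalIntegral.integral_of_le hu.1.le, hioc y u]
      ring
    rw [L, R]
    have L2 : (∫ u in Set.Ioc y x, (y - u) ^ n / (n.factorial : ℝ) * ∫ v in Set.Ioc u x, gg v)
        = ∫ v in Set.Ioc y x, (∫ u in Set.Ioc v x, gg u) * ((y - v) ^ n / (n.factorial : ℝ)) := by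
      apply setIntegral_congr_fun measurableSet_Ioc
      intro u _
      show (y - u) ^ n / (n.factorial : ℝ) * (∫ v in Set.Ioc u x, gg v)
          = (∫ v in Set.Ioc u x, gg v) * ((y - u) ^ n / (n.factorial : ℝ))
      ring
    have R2 : (∫ u in Set.Ioc y x, (∫ v in Set.Ioc y u, (y - v) ^ n / (n.factorial : ℝ)) * gg u)
        = ∫ u in Set.Ioc y x, gg u * ∫ v in Set.Ioc y u, (y - v) ^ n / (n.factorial : ℝ) := by
      apply setIntegral_congr_fun measurableSet_Ioc
      intro u _
      show (∫ v in Set.Ioc y u, (y - v) ^ n / (n.factorial : ℝ)) * gg u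
          = gg u * ∫ v in Set.Ioc y u, (y - v) ^ n / (n.factorial : ℝ)
      ring
    rw [L2, R2, ← h]

lemma taylor_aux (s : ℕ) (hs : 1 ≤ s) (f fs : ℝ → ℝ) (hsm : SSmooth s f fs) (x c : ℝ) :
    f (x + c) = (∑ j ∈ Finset.range s, iteratedDeriv j f x * c ^ j / j.factorial)
      + (∫ l in (0:ℝ)..1, fs (x + l * c) * ((s : ℝ) * (1 - l) ^ (s - 1))) * c ^ s
          / s.factorial := by
  obtain ⟨m, rfl⟩ : ∃ m, s = m + 1 := ⟨s - 1, by omega⟩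
  obtain ⟨hdiff, hftc, hfsint⟩ := hsm
  simp only [Nat.add_sub_cancel] at hdiff hftc ⊢
  have hfs_ii : ∀ a b : ℝ, IntervalIntegrable fs volume a b :=
    fun a b => hfsint.intervalIntegrable
  have hrep_top : ∀ a b : ℝ, iteratedDeriv m f b - iteratedDeriv m f a = ∫ v in a..b, fs v := by
    intro a b
    rcases le_total a b with h | h
    · exact hftc a b h
    · have := hftc b a h
      rw [intervalIntegral.integral_symm]; linarith
  have hcont_top : Continuous (iteratedDeriv m f) := by
    have e : iteratedDeriv m f = fun b => iteratedDeriv m f 0 + ∫ v in (0:ℝ)..b, fs v := by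
      funext b; have := hrep_top 0 b; linarith
    rw [e]
    exact continuous_const.add (intervalIntegral.continuous_primitive hfs_ii 0)
  have hcont : ∀ k, k ≤ m → Continuous (iteratedDeriv k f) := by
    intro k hk
    rcases eq_or_lt_of_le hk with h | h
    · subst h; exact hcont_top
    · exact (hdiff k h).continuous
  -- the family g
  set g : ℕ → ℝ → ℝ := fun k => if k = m + 1 then fs else iteratedDeriv k f with hgdef
  have hg_lt : ∀ k, k ≤ m → g k = iteratedDeriv k f := fun k h => if_neg (by omega)
  have hg_top : g (m + 1) = fs := if_pos rfl
  have hint_g : ∀ k, k ≤ m + 1 → ∀ a b : ℝ, IntervalIntegrable (g k) volume a b := by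
    intro k hk a b
    rcases eq_or_lt_of_le hk with h | h
    · rw [h, hg_top]; exact hfs_ii a b
    · rw [hg_lt k (by omega)]
      exact (hcont k (by omega)).intervalIntegrable a b
  have hrep_g : ∀ k, k ≤ m → ∀ a b : ℝ, g k b - g k a = ∫ v in a..b, g (k + 1) v := by
    intro k hk a b
    rw [hg_lt k hk]
    rcases eq_or_lt_of_le hk with h | h
    · subst h; rw [hg_top]; exact hrep_top a b
    · rw [hg_lt (k + 1) (by omega)]
      have hd : ∀ u ∈ Set.uIcc a b, HasDerivAt (iteratedDeriv k f) (iteratedDeriv (k + 1) f u) u := by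
        intro u _
        rw [iteratedDeriv_succ]
        exact ((hdiff k h) u).hasDerivAt
      rw [← intervalIntegral.integral_eq_sub_of_hasDerivAt hd
        ((hcont (k + 1) h).intervalIntegrable a b)]
  -- main induction
  have main : ∀ n, n ≤ m → ∀ y : ℝ,
      f y = (∑ j ∈ Finset.range (n + 1), iteratedDeriv j f x * (y - x) ^ j / j.factorial)
        + ∫ u in x..y, (y - u) ^ n / n.factorial * g (n + 1) u := by
    intro n
    induction n with
    | zero =>
      intro _ y
      have h0 := hrep_g 0 (by omega) x y
      rw [hg_lt 0 (by omega)] at h0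
      simp only [iteratedDeriv_zero, zero_add] at h0
      simp only [zero_add, Finset.sum_range_one, iteratedDeriv_zero, pow_zero,
        Nat.factorial_zero, Nat.cast_one, div_one, one_mul]
      linarith
    | succ n ih =>
      intro h y
      rw [ih (by omega) y, lemB (g (n + 1)) (g (n + 2)) n (hrep_g (n + 1) h)
        (hint_g (n + 2) (by omega) ), hg_lt (n + 1) h]
      simp only [show n + 1 + 1 = n + 2 from rfl]
      conv_rhs => rw [Finset.sum_range_succ]
      ring
  have hmain := main m le_rfl (x + c)
  rw [hmain]
  congr 1
  · apply Finset.sum_congr rfl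
    intro j _
    rw [show x + c - x = c by ring]
  -- remainder
  rw [hg_top]
  rcases eq_or_ne c 0 with hc | hc
  · subst hc
    simp [intervalIntegral.integral_same]
  · have hcomp := intervalIntegral.integral_comp_mul_add
      (a := (0:ℝ)) (b := 1) (f := fun u => (x + c - u) ^ m / (m.factorial : ℝ) * fs u) hc x
    -- hcomp : ∫ l in 0..1, F (c*l + x) = c⁻¹ • ∫ u in c*0+x..c*1+x, F u
    have e2 : (c * 0 + x) = x := by ring
    have e3 : (c * 1 + x) = x + c := by ring
    rw [e2, e3] at hcomp
    have e4 : (fun l => (x + c - (c * l + x)) ^ m / (m.factorial : ℝ) * fs (c * l + x))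
        = fun l => (fs (x + l * c) * (1 - l) ^ m) * (c ^ m / (m.factorial : ℝ)) := by
      funext l
      have h1 : x + c - (c * l + x) = c * (1 - l) := by ring
      have h2 : c * l + x = x + l * c := by ring
      rw [h1, h2, mul_pow]
      ring
    rw [e4] at hcomp
    rw [intervalIntegral.integral_mul_const] at hcomp
    -- hcomp : (∫ l in 0..1, fs (x+l*c) * (1-l)^m) * (c^m/m!) = c⁻¹ • ∫ u in x..x+c, F u
    have e5 : (∫ l in (0:ℝ)..1, fs (x + l * c) * ((↑(m+1) : ℝ) * (1 - l) ^ m))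
        = (∫ l in (0:ℝ)..1, fs (x + l * c) * (1 - l) ^ m) * (m + 1 : ℝ) := by
      rw [← intervalIntegral.integral_mul_const]
      apply intervalIntegral.integral_congr
      intro l _
      push_cast
      ring
    rw [e5]
    have hfacs : ((m + 1).factorial : ℝ) = (m + 1) * m.factorial := by
      push_cast [Nat.factorial_succ]; ring
    have hint1 : (∫ u in x..x + c, (x + c - u) ^ m / (m.factorial : ℝ) * fs u)
        = c * ((∫ l in (0:ℝ)..1, fs (x + l * c) * (1 - l) ^ m) * (c ^ m / (m.factorial : ℝ))) := by
      rw [hcomp, smul_eq_mul]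
      field_simp
    rw [hint1, hfacs]
    have hm1 : ((m : ℝ) + 1) ≠ 0 := by positivity
    have hmf : ((m.factorial : ℝ)) ≠ 0 := Nat.cast_ne_zero.2 (Nat.factorial_ne_zero m)
    field_simp
    ring

/-- equation (210): the integral representation of the bias of the
smoothed density, for a kernel whose moments of orders `1, …, s−1` vanish. -/
theorem bias_integral_representation
    (s : ℕ) (hs : 1 ≤ s) (hh : ℝ) (hhpos : 0 < hh)
    (K : ℝ → ℝ) (hK : IsKernel K)
    (hmom : ∀ j, 1 ≤ j → j < s → alphaM j K = 0)
    (hbeta : Integrable (fun t => |t| ^ (s : ℝ) * |K t|))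
    (f fs : ℝ → ℝ) (hf : Integrable f) (hsm : SSmooth s f fs) :
    ∀ᵐ x : ℝ,
      conv f (Sker hh K) x - f x =
        (-hh) ^ s / (Nat.factorial s : ℝ) *
          ∫ t, (∫ l in (0 : ℝ)..1, fs (x - hh * l * t) * (s * (1 - l) ^ (s - 1))) *
            (t ^ s * K t) := by
  obtain ⟨hKint, hKone⟩ := hK
  have hbeta' : Integrable (fun t => |t| ^ s * |K t|) := by
    have e : (fun t : ℝ => |t| ^ (s : ℝ) * |K t|) = fun t => |t| ^ s * |K t| := by
      funext t; rw [Real.rpow_natCast]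
    rwa [e] at hbeta
  have hKj : ∀ j, j ≤ s → Integrable (fun t : ℝ => t ^ j * K t) := by
    intro j hj
    refine Integrable.mono' (hKint.abs.add hbeta')
      ((continuous_pow j).aestronglyMeasurable.mul hKint.aestronglyMeasurable)
      (Eventually.of_forall fun t => ?_)
    rw [Real.norm_eq_abs, abs_mul, abs_pow]
    have h1 : |t| ^ j ≤ 1 + |t| ^ s := by
      rcases le_total (|t|) 1 with h | h
      · have : |t| ^ j ≤ 1 := pow_le_one₀ (abs_nonneg t) h
        nlinarith [pow_nonneg (abs_nonneg t) s]
      · have : |t| ^ j ≤ |t| ^ s := pow_le_pow_right₀ h hj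
        linarith [this]
    calc |t| ^ j * |K t| ≤ (1 + |t| ^ s) * |K t| :=
          mul_le_mul_of_nonneg_right h1 (abs_nonneg _)
      _ = |K t| + |t| ^ s * |K t| := by ring
  have hSker : Integrable (Sker hh K) := by
    have h1 : Integrable (fun x : ℝ => K (hh⁻¹ * x)) :=
      hKint.comp_mul_left' (inv_ne_zero hhpos.ne')
    have h2 := h1.const_mul (1 / hh)
    refine h2.congr (Eventually.of_forall fun x => ?_)
    simp [Sker, div_eq_inv_mul, mul_comm]
  have hae : ∀ᵐ x : ℝ, Integrable (fun t => K t * f (x - hh * t)) := by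
    have h1 : ∀ᵐ x : ℝ, Integrable (fun y => Sker hh K y * f (x - y)) := by
      have h := hSker.ae_convolution_exists (L := ContinuousLinearMap.mul ℝ ℝ)
        (μ := (volume : Measure ℝ)) (ν := (volume : Measure ℝ)) (g := f) hf
      filter_upwards [h] with x hx
      simpa [ConvolutionExistsAt] using hx
    filter_upwards [h1] with x hx
    have h2 : Integrable (fun t => Sker hh K (hh * t) * f (x - hh * t)) :=
      hx.comp_mul_left' hhpos.ne'
    have h3 := h2.const_mul hh
    refine h3.congr (Eventually.of_forall fun t => ?_)
    show hh * (Sker hh K (hh * t) * f (x - hh * t)) = K t * f (x - hh * t)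
    simp only [Sker]
    rw [show hh * t / hh = t from by field_simp]
    field_simp
  filter_upwards [hae] with x hx
  -- change of variable in the convolution
  have hconv : conv f (Sker hh K) x = ∫ t, K t * f (x - hh * t) := by
    have h0 := MeasureTheory.Measure.integral_comp_mul_left
      (fun y => Sker hh K y * f (x - y)) hh
    have habs : |hh⁻¹| = hh⁻¹ := abs_of_pos (by positivity)
    rw [habs] at h0
    have h1 : (∫ y, Sker hh K y * f (x - y))
        = hh • ∫ t, Sker hh K (hh * t) * f (x - hh * t) := by
      rw [h0, smul_smul, mul_inv_cancel₀ hhpos.ne', one_smul]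
    show (∫ y, Sker hh K y * f (x - y)) = _
    rw [h1, ← integral_smul]
    congr 1
    funext t
    show hh • (Sker hh K (hh * t) * f (x - hh * t)) = K t * f (x - hh * t)
    simp only [Sker, smul_eq_mul]
    rw [show hh * t / hh = t from by field_simp]
    field_simp
  -- pointwise Taylor expansion
  have key : ∀ t : ℝ, K t * f (x - hh * t)
      = (∑ j ∈ Finset.range s,
          (iteratedDeriv j f x * (-hh) ^ j / j.factorial) * (t ^ j * K t))
        + ((-hh) ^ s / s.factorial) *
            ((∫ l in (0:ℝ)..1, fs (x - hh * l * t) * ((s:ℝ) * (1 - l) ^ (s - 1)))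
              * (t ^ s * K t)) := by
    intro t
    have ht := taylor_aux s hs f fs hsm x (-(hh * t))
    rw [show x + -(hh * t) = x - hh * t from by ring] at ht
    have hI2 : (∫ l in (0:ℝ)..1, fs (x + l * -(hh * t)) * ((s:ℝ) * (1 - l) ^ (s - 1)))
        = ∫ l in (0:ℝ)..1, fs (x - hh * l * t) * ((s:ℝ) * (1 - l) ^ (s - 1)) := by
      apply intervalIntegral.integral_congr
      intro l _
      congr 2
      ring
    rw [hI2] at ht
    rw [ht, mul_add, Finset.mul_sum]
    congr 1
    · apply Finset.sum_congr rfl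
      intro j _
      rw [show -(hh * t) = (-hh) * t from by ring, mul_pow]
      ring
    · rw [show -(hh * t) = (-hh) * t from by ring, mul_pow]
      ring
  -- integrate term by term
  set P : ℝ → ℝ := fun t => ∑ j ∈ Finset.range s,
    (iteratedDeriv j f x * (-hh) ^ j / j.factorial) * (t ^ j * K t) with hP
  set R : ℝ → ℝ := fun t => ((-hh) ^ s / s.factorial) *
    ((∫ l in (0:ℝ)..1, fs (x - hh * l * t) * ((s:ℝ) * (1 - l) ^ (s - 1)))
      * (t ^ s * K t)) with hR
  have hPint : Integrable P :=
    integrable_finset_sum _ (fun j hj =>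
      ((hKj j (Finset.mem_range.1 hj).le).const_mul _))
  have hRint : Integrable R := by
    have e : R = fun t => (K t * f (x - hh * t)) - P t := by
      funext t; rw [key t]; simp [hP, hR]
    rw [e]
    exact hx.sub hPint
  have hsplit : (fun t => K t * f (x - hh * t)) = fun t => P t + R t := funext key
  rw [hconv, hsplit, integral_add hPint hRint]
  have hPval : (∫ t, P t) = f x := by
    rw [hP, integral_finset_sum _ (fun j hj =>
      ((hKj j (Finset.mem_range.1 hj).le).const_mul _))]
    have e : ∀ j ∈ Finset.range s,
        (∫ t, (iteratedDeriv j f x * (-hh) ^ j / j.factorial) * (t ^ j * K t))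
          = (iteratedDeriv j f x * (-hh) ^ j / j.factorial) * alphaM j K := by
      intro j _
      rw [integral_const_mul]
      rfl
    rw [Finset.sum_congr rfl e]
    rw [Finset.sum_eq_single_of_mem 0 (Finset.mem_range.2 (by omega))]
    · have h00 : alphaM 0 K = 1 := by
        simp only [alphaM, pow_zero, one_mul]
        exact hKone
      simp [h00, iteratedDeriv_zero]
    · intro j hj hne
      rw [hmom j (Nat.one_le_iff_ne_zero.2 hne) (Finset.mem_range.1 hj), mul_zero]
  rw [hPval]
  have hRval : (∫ t, R t) = ((-hh) ^ s / s.factorial) *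
      ∫ t, (∫ l in (0:ℝ)..1, fs (x - hh * l * t) * ((s:ℝ) * (1 - l) ^ (s - 1)))
        * (t ^ s * K t) := by
    rw [hR, integral_const_mul]
  rw [hRval]
  ring
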